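/- Every bounded linear operator T : H → K between Hilbert spaces that is limited (T(B_H) is a limited set) is compact. -/

import Mathlib

open Filter

/-- A subset `A` of a normed space is limited if every weak*-null sequence of functionals
converges to `0` uniformly on `A`. -/
def IsLimited (𝕜 : Type*) [RCLike 𝕜] {X : Type*} [NormedAddCommGroup X]
    [NormedSpace 𝕜 X] (A : Set X) : Prop :=
  ∀ f : ℕ → X →L[𝕜] 𝕜, (∀ x : X, Tendsto (fun n => f n x) atTop (nhds 0)) →
    ∀ ε > (0 : ℝ), ∃ N : ℕ, ∀ n ≥ N, ∀ a ∈ A, ‖f n a‖ < ε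

section Aux

/-- From a non-totally-bounded set, extract an `ε`-separated sequence. -/
lemma aux_sep {α : Type*} [MetricSpace α] {s : Set α} (h : ¬ TotallyBounded s) :
    ∃ ε > (0 : ℝ), ∃ u : ℕ → α, (∀ n, u n ∈ s) ∧
      ∀ m n, m ≠ n → ε ≤ dist (u m) (u n) := by
  rw [Metric.totallyBounded_iff] at h
  push_neg at h
  obtain ⟨ε, hε, hh⟩ := h
  refine ⟨ε, hε, ?_⟩
  have key : ∀ l : List α, ∃ x ∈ s, ∀ y ∈ l, ε ≤ dist x y := by
    intro l
    have h2 := hh {y | y ∈ l} l.finite_toSet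
    rw [Set.not_subset] at h2
    obtain ⟨x, hxs, hx⟩ := h2
    refine ⟨x, hxs, fun y hy => ?_⟩
    by_contra hlt
    push_neg at hlt
    exact hx (Set.mem_biUnion hy (Metric.mem_ball.mpr hlt))
  choose pick hpick1 hpick2 using key
  let v : ℕ → List α := fun n => Nat.rec [] (fun _ l => pick l :: l) n
  have hv : ∀ n, v (n + 1) = pick (v n) :: v n := fun n => rfl
  refine ⟨fun n => pick (v n), fun n => hpick1 _, ?_⟩
  have hmem : ∀ n m, m < n → pick (v m) ∈ v n := by
    intro n
    induction n with
    | zero => intro m hm; omega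
    | succ k ih =>
      intro m hm
      rw [hv]
      rcases Nat.lt_succ_iff_lt_or_eq.mp hm with h' | h'
      · exact List.mem_cons_of_mem _ (ih m h')
      · subst h'; exact List.mem_cons_self
  intro m n hmn
  rcases lt_or_gt_of_ne hmn with h' | h'
  · rw [dist_comm]; exact hpick2 (v n) _ (hmem n m h')
  · exact hpick2 (v m) _ (hmem m n h')

variable {𝕜 E : Type*} [RCLike 𝕜] [NormedAddCommGroup E] [InnerProductSpace 𝕜 E]

local notation "⟪" x ", " y "⟫" => @inner 𝕜 _ _ x y

/-- A bounded `ε`-separated sequence cannot stay within `ε/4` of a fixed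
finite-dimensional subspace. -/
lemma aux_far (u : ℕ → E) (C ε : ℝ) (hε : 0 < ε)
    (hb : ∀ n, ‖u n‖ ≤ C) (hsep : ∀ m n, m ≠ n → ε ≤ dist (u m) (u n))
    (M : Submodule 𝕜 E) [FiniteDimensional 𝕜 M] :
    ∃ n, ε / 4 < ‖u n - (Submodule.orthogonalProjectionOnto M (u n) : E)‖ := by
  by_contra hc
  push_neg at hc
  set P : ℕ → M := fun n => Submodule.orthogonalProjectionOnto M (u n) with hP
  have hPb : ∀ n, P n ∈ Metric.closedBall (0 : M) (C + ε / 4) := by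
    intro n
    rw [Metric.mem_closedBall, dist_zero_right]
    have h1 : ‖(P n : E)‖ ≤ ‖u n‖ + ε / 4 := by
      have h2 := hc n
      calc ‖(P n : E)‖ = ‖u n - (u n - (P n : E))‖ := by rw [sub_sub_cancel]
        _ ≤ ‖u n‖ + ‖u n - (P n : E)‖ := norm_sub_le _ _
        _ ≤ ‖u n‖ + ε / 4 := by linarith
    calc ‖P n‖ = ‖(P n : E)‖ := rfl
      _ ≤ ‖u n‖ + ε / 4 := h1
      _ ≤ C + ε / 4 := by linarith [hb n]
  have htb : TotallyBounded (Metric.closedBall (0 : M) (C + ε / 4)) :=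
    (isCompact_closedBall _ _).totallyBounded
  obtain ⟨t, htfin, hcov⟩ := Metric.totallyBounded_iff.mp htb (ε / 8) (by linarith)
  have hmem : ∀ n, ∃ y ∈ t, P n ∈ Metric.ball y (ε / 8) := by
    intro n
    have := hcov (hPb n)
    simpa using this
  choose g hg hgd using hmem
  haveI := htfin.to_subtype
  obtain ⟨m, n, hmn, heq⟩ :=
    Finite.exists_ne_map_eq_of_infinite (fun k => (⟨g k, hg k⟩ : t))
  have hgeq : g m = g n := congrArg Subtype.val heq
  have hd : dist (P m) (P n) < ε / 4 := by
    calc dist (P m) (P n) ≤ dist (P m) (g m) + dist (g m) (P n) := dist_triangle _ _ _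
      _ < ε / 8 + ε / 8 := by
          have h1 := Metric.mem_ball.mp (hgd m)
          have h2 : dist (g m) (P n) < ε / 8 := by
            rw [hgeq, dist_comm]
            exact Metric.mem_ball.mp (hgd n)
          exact add_lt_add h1 h2
      _ = ε / 4 := by ring
  have hlt : dist (u m) (u n) < ε := by
    calc dist (u m) (u n)
        ≤ dist (u m) (P m : E) + dist (P m : E) (P n : E) + dist (P n : E) (u n) :=
          dist_triangle4 _ _ _ _
      _ < ε / 4 + ε / 4 + ε / 4 := by
          have h1 : dist (u m) (P m : E) ≤ ε / 4 := by
            rw [dist_eq_norm]; exact hc m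
          have h2 : dist (P n : E) (u n) ≤ ε / 4 := by
            rw [dist_comm, dist_eq_norm]; exact hc n
          have h3 : dist (P m : E) (P n : E) < ε / 4 := by
            rw [← Subtype.dist_eq]; exact hd
          linarith
      _ ≤ ε := by linarith
  exact absurd (hsep m n hmn) (not_le.mpr hlt)

noncomputable local instance hasOP_span_list (l : List E) :
    Submodule.HasOrthogonalProjection (Submodule.span 𝕜 {x | x ∈ l}) := by
  haveI := FiniteDimensional.span_of_finite 𝕜 l.finite_toSet
  infer_instance

/-- If the inner products against every orthonormal sequence tend to zero uniformly on a
bounded set `s`, then `s` is totally bounded. -/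
lemma aux_tb {s : Set E} {C : ℝ} (hb : ∀ a ∈ s, ‖a‖ ≤ C)
    (hlim : ∀ e : ℕ → E, Orthonormal 𝕜 e →
      ∀ ε > (0 : ℝ), ∃ N, ∀ n ≥ N, ∀ a ∈ s, ‖(⟪e n, a⟫ : 𝕜)‖ < ε) :
    TotallyBounded s := by
  by_contra hnt
  obtain ⟨ε, hε, u, hus, hsep⟩ := aux_sep hnt
  have hub : ∀ n, ‖u n‖ ≤ C := fun n => hb _ (hus n)
  have key : ∀ l : List E, ∃ n, ε / 4 <
      ‖u n - (Submodule.orthogonalProjectionOnto (Submodule.span 𝕜 {x | x ∈ l}) (u n) : E)‖ := by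
    intro l
    haveI := FiniteDimensional.span_of_finite 𝕜 l.finite_toSet
    exact aux_far u C ε hε hub hsep _
  choose idx hidx using key
  obtain ⟨L, hL⟩ : ∃ L : ℕ → List E, ∀ k, L (k + 1) = u (idx (L k)) :: L k :=
    ⟨fun k => Nat.rec [] (fun _ l => u (idx l) :: l) k, fun k => rfl⟩
  -- abbreviations (kept as plain functions so that instances fire)
  set a : ℕ → E := fun k => u (idx (L k)) with ha
  set w : ℕ → E := fun k =>
    a k - (Submodule.orthogonalProjectionOnto (Submodule.span 𝕜 {x | x ∈ L k}) (a k) : E) with hw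
  have hwnorm : ∀ k, ε / 4 < ‖w k‖ := fun k => hidx (L k)
  have hwpos : ∀ k, 0 < ‖w k‖ := fun k => lt_of_le_of_lt (by linarith) (hwnorm k)
  have hwne : ∀ k, ‖w k‖ ≠ 0 := fun k => ne_of_gt (hwpos k)
  set e : ℕ → E := fun k => ((‖w k‖ : 𝕜))⁻¹ • w k with he
  -- list monotonicity
  have hstep : ∀ k, ∀ x ∈ L k, x ∈ L (k + 1) := by
    intro k x hx
    rw [hL]
    exact List.mem_cons_of_mem _ hx
  have hsub : ∀ k k', k ≤ k' → ∀ x ∈ L k, x ∈ L k' := by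
    intro k k' hk
    induction k' , hk using Nat.le_induction with
    | base => exact fun x hx => hx
    | succ j hj ih => exact fun x hx => hstep j x (ih x hx)
  have hMmono : ∀ k k', k ≤ k' →
      Submodule.span 𝕜 {x | x ∈ L k} ≤ Submodule.span 𝕜 {x | x ∈ L k'} :=
    fun k k' hk => Submodule.span_mono (fun x hx => hsub k k' hk x hx)
  have haMk : ∀ j k, j < k → a j ∈ Submodule.span 𝕜 {x | x ∈ L k} := by
    intro j k hjk
    apply Submodule.subset_span
    exact hsub (j + 1) k hjk (a j) (by rw [hL]; exact List.mem_cons_self)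
  have hwMk : ∀ j k, j < k → w j ∈ Submodule.span 𝕜 {x | x ∈ L k} := by
    intro j k hjk
    rw [hw]
    refine Submodule.sub_mem _ (haMk j k hjk) ?_
    exact hMmono j k (le_of_lt hjk)
      (Submodule.orthogonalProjectionOnto (Submodule.span 𝕜 {x | x ∈ L j}) (a j)).2
  have heMk : ∀ j k, j < k → e j ∈ Submodule.span 𝕜 {x | x ∈ L k} := by
    intro j k hjk
    exact Submodule.smul_mem _ _ (hwMk j k hjk)
  have hworth : ∀ k, w k ∈ (Submodule.span 𝕜 {x | x ∈ L k})ᗮ := fun k =>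
    Submodule.sub_starProjection_mem_orthogonal (a k)
  have hinner0 : ∀ j k, j < k → ⟪e k, e j⟫ = 0 := by
    intro j k hjk
    have h1 : ⟪w k, e j⟫ = 0 :=
      (Submodule.mem_orthogonal' _ _).mp (hworth k) (e j) (heMk j k hjk)
    show ⟪((‖w k‖ : 𝕜))⁻¹ • w k, e j⟫ = 0
    rw [inner_smul_left, h1, mul_zero]
  have hunit : ∀ k, ‖e k‖ = 1 := by
    intro k
    show ‖((‖w k‖ : 𝕜))⁻¹ • w k‖ = 1
    rw [norm_smul, norm_inv, RCLike.norm_ofReal, abs_of_nonneg (norm_nonneg _)]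
    exact inv_mul_cancel₀ (hwne k)
  have honb : Orthonormal 𝕜 e := by
    constructor
    · exact hunit
    · intro i j hij
      rcases lt_or_gt_of_ne hij with h' | h'
      · rw [inner_eq_zero_symm]
        exact hinner0 i j h'
      · exact hinner0 j i h'
  obtain ⟨N, hN⟩ := hlim e honb (ε / 4) (by linarith)
  have hcon := hN N le_rfl (a N) (hus _)
  have hsplit : ⟪w N, a N⟫ = (‖w N‖ : 𝕜) ^ 2 := by
    have hdecomp : a N = w N +
        (Submodule.orthogonalProjectionOnto (Submodule.span 𝕜 {x | x ∈ L N}) (a N) : E) := by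
      rw [hw, sub_add_cancel]
    rw [hdecomp, inner_add_right]
    have h0 : ⟪w N, (Submodule.orthogonalProjectionOnto (Submodule.span 𝕜 {x | x ∈ L N}) (a N) : E)⟫ = 0 :=
      (Submodule.mem_orthogonal' _ _).mp (hworth N) _
        (Submodule.orthogonalProjectionOnto (Submodule.span 𝕜 {x | x ∈ L N}) (a N)).2
    rw [h0, add_zero, inner_self_eq_norm_sq_to_K]
  have hval : ⟪e N, a N⟫ = (‖w N‖ : 𝕜) := by
    show ⟪((‖w N‖ : 𝕜))⁻¹ • w N, a N⟫ = (‖w N‖ : 𝕜)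
    rw [inner_smul_left, hsplit, map_inv₀, RCLike.conj_ofReal, sq, ← mul_assoc,
      inv_mul_cancel₀ (by exact_mod_cast hwne N), one_mul]
  rw [hval, RCLike.norm_ofReal, abs_of_nonneg (norm_nonneg _)] at hcon
  exact absurd (hwnorm N) (not_lt.mpr (le_of_lt hcon))

end Aux

theorem limited_operator_between_hilbert_spaces_is_compact
    {𝕜 H K : Type*} [RCLike 𝕜] [NormedAddCommGroup H] [InnerProductSpace 𝕜 H]
    [CompleteSpace H] [NormedAddCommGroup K] [InnerProductSpace 𝕜 K]
    [CompleteSpace K] (T : H →L[𝕜] K)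
    (h : IsLimited 𝕜 (T '' Metric.closedBall (0 : H) 1)) :
    IsCompact (closure (T '' Metric.closedBall (0 : H) 1)) := by
  have hbd : ∀ a ∈ T '' Metric.closedBall (0 : H) 1, ‖a‖ ≤ ‖T‖ := by
    rintro a ⟨x, hx, rfl⟩
    rw [Metric.mem_closedBall, dist_zero_right] at hx
    calc ‖T x‖ ≤ ‖T‖ * ‖x‖ := T.le_opNorm x
      _ ≤ ‖T‖ * 1 := mul_le_mul_of_nonneg_left hx (norm_nonneg _)
      _ = ‖T‖ := mul_one _
  have htb : TotallyBounded (T '' Metric.closedBall (0 : H) 1) := by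
    apply aux_tb (𝕜 := 𝕜) hbd
    intro e he ε hε
    have hwn : ∀ x : K, Tendsto (fun n => (innerSL 𝕜 (e n)) x) atTop (nhds 0) := by
      intro x
      have hsum : Summable fun n => ‖(inner 𝕜 (e n) x : 𝕜)‖ ^ 2 := he.inner_products_summable x
      have h2 : Tendsto (fun n => ‖(inner 𝕜 (e n) x : 𝕜)‖ ^ 2) atTop (nhds 0) :=
        hsum.tendsto_atTop_zero
      have h3 : Tendsto (fun n => ‖(inner 𝕜 (e n) x : 𝕜)‖) atTop (nhds 0) := by
        have h4 := h2.sqrt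
        rw [Real.sqrt_zero] at h4
        have heq : (fun n => Real.sqrt (‖(inner 𝕜 (e n) x : 𝕜)‖ ^ 2)) =
            fun n => ‖(inner 𝕜 (e n) x : 𝕜)‖ := by
          funext n
          exact Real.sqrt_sq (norm_nonneg _)
        rwa [heq] at h4
      rw [tendsto_zero_iff_norm_tendsto_zero]
      simpa using h3
    obtain ⟨N, hN⟩ := h (fun n => innerSL 𝕜 (e n)) hwn ε hε
    exact ⟨N, fun n hn a ha => by simpa using hN n hn a ha⟩
  exact TotallyBounded.isCompact_of_isClosed htb.closure isClosed_closure
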